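/- Every flow-feasible occupation measure is realized by a Markovian policy: Let ρ : S × A × {1,…,H} → [0,1] satisfy: Σ_{a} ρ(s,a,1) = 𝟙{s = s0} for all s ∈ S, and the flow constraints Σ_{a'} ρ(s',a',h+1) = Σ_{s,a} ρ(s,a,h)·p(s'|s,a) for all s' ∈ S and h ∈ {1,…,H−1}, where p is a transition function. Define a Markovian policy π by π_h(a|s) = ρ(s,a,h) / Σ_{a'} ρ(s,a',h) whenever Σ_{a'} ρ(s,a',h) > 0 (and arbitrarily otherwise). Then the occupation measure of π equals ρ, i.e., ρ_π(s,a,h) = ρ(s,a,h) for all s, a, h; consequently, for every objective m : S × A → ℝ, V_m^{π,p}(s0,1) = Σ_{h=1}^H Σ_{s,a} ρ(s,a,h)·m(s,a). -/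

import Mathlib

open Finset

section MDPDefs

variable {S A : Type*} [Fintype S] [Fintype A]

/-- Expected cumulative sum of a step-dependent objective `φ h s a`, defined by
backward recursion on the number `n` of remaining steps, where `h` is the current stage. -/
noncomputable def EValAux (π : ℕ → S → PMF A) (p : S → A → PMF S)
    (φ : ℕ → S → A → ℝ) : ℕ → ℕ → S → ℝ
  | 0, _, _ => 0
  | n + 1, h, s =>
      ∑ a : A, (π h s a).toReal *
        (φ h s a + ∑ s' : S, (p s a s').toReal * EValAux π p φ n (h + 1) s')

/-- `EVal H π p φ h s = E^{π,p}[ Σ_{h'=h}^H φ(h', s_{h'}, a_{h'}) | s_h = s ]`. -/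
noncomputable def EVal (H : ℕ) (π : ℕ → S → PMF A) (p : S → A → PMF S)
    (φ : ℕ → S → A → ℝ) (h : ℕ) (s : S) : ℝ :=
  EValAux π p φ (H + 1 - h) h s

/-- Value function `V_m^{π,p}(s,h)` of the objective `m` for horizon `H`. -/
noncomputable def Vf (H : ℕ) (π : ℕ → S → PMF A) (p : S → A → PMF S)
    (m : S → A → ℝ) (h : ℕ) (s : S) : ℝ :=
  EVal H π p (fun _ s a => m s a) h s

/-- Q-function `Q_m^{π,p}(s,a,h)` of the objective `m` for horizon `H`. -/
noncomputable def Qf (H : ℕ) (π : ℕ → S → PMF A) (p : S → A → PMF S)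
    (m : S → A → ℝ) (h : ℕ) (s : S) (a : A) : ℝ :=
  m s a + ∑ s' : S, (p s a s').toReal * Vf H π p m (h + 1) s'

/-- Bellman error of the model `(p, m)` under policy `π`, with respect to the
true transition function `pstar` and true objective `mstar`. -/
noncomputable def Bell (H : ℕ) (π : ℕ → S → PMF A) (p : S → A → PMF S) (m : S → A → ℝ)
    (pstar : S → A → PMF S) (mstar : S → A → ℝ) (h : ℕ) (s : S) (a : A) : ℝ :=
  Qf H π p m h s a - (mstar s a + ∑ s' : S, (pstar s a s').toReal * Vf H π p m (h + 1) s')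

end MDPDefs

/-- Occupation measure `ρ_π(s,a,h) = ℙ^{π,p}(s_h = s, a_h = a | s_1 = s0)`,
defined by forward recursion. -/
noncomputable def occ {S A : Type*} [Fintype S] [Fintype A] [DecidableEq S]
    (π : ℕ → S → PMF A) (p : S → A → PMF S) (s0 : S) : ℕ → S → A → ℝ
  | 0, _, _ => 0
  | 1, s, a => (if s = s0 then 1 else 0) * (π 1 s0 a).toReal
  | h + 2, s', a' =>
      (∑ s : S, ∑ a : A, occ π p s0 (h + 1) s a * (p s a s').toReal) * (π (h + 2) s' a').toReal

/-- **Every flow-feasible occupation measure is realized by a Markovian policy.**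
If `ρ` satisfies the initial condition and the flow constraints, and `π` is the
policy obtained by normalizing `ρ` (arbitrary where the normalization is not
defined), then the occupation measure of `π` equals `ρ`, and consequently values
of every objective are represented by `ρ`. -/
theorem flow_feasible_occupation_realized
    {S A : Type*} [Fintype S] [Fintype A] [DecidableEq S] [Nonempty S] [Nonempty A]
    (H : ℕ) (s0 : S) (p : S → A → PMF S)
    (ρ : ℕ → S → A → ℝ)
    (hρ : ∀ h s a, 0 ≤ ρ h s a ∧ ρ h s a ≤ 1)
    (hinit : ∀ s : S, ∑ a : A, ρ 1 s a = if s = s0 then 1 else 0)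
    (hflow : ∀ s' : S, ∀ h, 1 ≤ h → h ≤ H - 1 →
        ∑ a' : A, ρ (h + 1) s' a'
          = ∑ s : S, ∑ a : A, ρ h s a * (p s a s').toReal)
    (π : ℕ → S → PMF A)
    (hπ : ∀ h s a, 1 ≤ h → h ≤ H → 0 < ∑ a' : A, ρ h s a' →
        (π h s a).toReal = ρ h s a / ∑ a' : A, ρ h s a') :
    (∀ h s a, 1 ≤ h → h ≤ H → occ π p s0 h s a = ρ h s a)
    ∧ (∀ m : S → A → ℝ,
        Vf H π p m 1 s0
          = ∑ h ∈ Finset.Icc 1 H, ∑ s : S, ∑ a : A, ρ h s a * m s a) := by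
  have hπsum : ∀ h (s : S), ∑ a : A, (π h s a).toReal = 1 := by
    intro h s
    have h1 := (π h s).tsum_coe
    rw [tsum_fintype] at h1
    rw [← ENNReal.toReal_sum (fun a _ => PMF.apply_ne_top _ _), h1, ENNReal.toReal_one]
  have hocc : ∀ h, 1 ≤ h → h ≤ H → ∀ s a, occ π p s0 h s a = ρ h s a := by
    intro h
    induction h with
    | zero => intro h1; omega
    | succ n ih =>
      rcases n with - | k
      · -- h = 1
        intro _ h2 s a
        by_cases hs : s = s0
        · subst hs
          have hσ : ∑ a' : A, ρ 1 s a' = 1 := by simpa using hinit s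
          have hπ1 := hπ 1 s a le_rfl h2 (by rw [hσ]; norm_num)
          simp [occ, hπ1, hσ]
        · have hz : ∑ a' : A, ρ 1 s a' = 0 := by simpa [hs] using hinit s
          have := (Finset.sum_eq_zero_iff_of_nonneg
            (fun i _ => (hρ 1 s i).1)).mp hz a (Finset.mem_univ a)
          simp [occ, hs, this]
      · -- h = k + 2
        intro _ h2 s a
        have hC : (∑ s' : S, ∑ a' : A, occ π p s0 (k + 1) s' a' * (p s' a' s).toReal)
            = ∑ s' : S, ∑ a' : A, ρ (k + 1) s' a' * (p s' a' s).toReal := by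
          refine Finset.sum_congr rfl fun s' _ => Finset.sum_congr rfl fun a' _ => ?_
          rw [ih (by omega) (by omega)]
        have hflow' := hflow s (k + 1) (by omega) (by omega)
        have hocceq : occ π p s0 (k + 2) s a
            = (∑ a' : A, ρ (k + 2) s a') * (π (k + 2) s a).toReal := by
          rw [occ, hC, ← hflow']
        by_cases hσ : 0 < ∑ a' : A, ρ (k + 2) s a'
        · rw [hocceq, hπ (k + 2) s a (by omega) h2 hσ]
          field_simp
        · have hz : ∑ a' : A, ρ (k + 2) s a' = 0 :=
            le_antisymm (not_lt.mp hσ) (Finset.sum_nonneg fun i _ => (hρ _ s i).1)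
          have := (Finset.sum_eq_zero_iff_of_nonneg
            (fun i _ => (hρ (k + 2) s i).1)).mp hz a (Finset.mem_univ a)
          rw [hocceq, hz, zero_mul, this]
  refine ⟨fun h s a h1 h2 => hocc h h1 h2 s a, fun m => ?_⟩
  have hocc_fact : ∀ h (s : S) (a : A), 1 ≤ h →
      occ π p s0 h s a = (∑ a' : A, occ π p s0 h s a') * (π h s a).toReal := by
    intro h s a h1
    rcases h with - | n
    · omega
    rcases n with - | k
    · by_cases hs : s = s0
      · subst hs
        simp [occ, ← Finset.mul_sum, hπsum]
      · simp [occ, hs]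
    · rw [occ]
      conv_rhs => rw [show (∑ a' : A, occ π p s0 (k + 2) s a')
        = (∑ s' : S, ∑ a' : A, occ π p s0 (k + 1) s' a' * (p s' a' s).toReal)
          * ∑ a' : A, (π (k + 2) s a').toReal by rw [Finset.mul_sum]; rfl]
      rw [hπsum, mul_one]
  have hDstep : ∀ h (s' : S), 1 ≤ h →
      ∑ a' : A, occ π p s0 (h + 1) s' a'
        = ∑ s : S, ∑ a : A, occ π p s0 h s a * (p s a s').toReal := by
    intro h s' h1
    rcases h with - | k
    · omega
    rw [show (∑ a' : A, occ π p s0 (k + 1 + 1) s' a')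
        = (∑ s : S, ∑ a : A, occ π p s0 (k + 1) s a * (p s a s').toReal)
          * ∑ a' : A, (π (k + 2) s' a').toReal by rw [Finset.mul_sum]; rfl]
    rw [hπsum, mul_one]
  have key : ∀ (φ : ℕ → S → A → ℝ) (n h : ℕ), 1 ≤ h →
      (∑ s : S, (∑ a : A, occ π p s0 h s a) * EValAux π p φ n h s)
        = ∑ k ∈ Finset.range n, ∑ s : S, ∑ a : A,
            occ π p s0 (h + k) s a * φ (h + k) s a := by
    intro φ n
    induction n with
    | zero => intro h _; simp [EValAux]
    | succ n ihn =>
      intro h hh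
      have step1 : ∀ s : S, (∑ a : A, occ π p s0 h s a) * EValAux π p φ (n + 1) h s
          = (∑ a : A, occ π p s0 h s a * φ h s a)
            + ∑ a : A, ∑ s' : S,
                occ π p s0 h s a * ((p s a s').toReal * EValAux π p φ n (h + 1) s') := by
        intro s
        rw [EValAux, Finset.mul_sum, ← Finset.sum_add_distrib]
        refine Finset.sum_congr rfl fun a _ => ?_
        rw [hocc_fact h s a hh, mul_add, Finset.mul_sum, mul_add, Finset.mul_sum]
        refine congrArg₂ (· + ·) (by ring) (Finset.sum_congr rfl fun s' _ => by ring)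
      calc (∑ s : S, (∑ a : A, occ π p s0 h s a) * EValAux π p φ (n + 1) h s)
          = (∑ s : S, ∑ a : A, occ π p s0 h s a * φ h s a)
            + ∑ s : S, ∑ a : A, ∑ s' : S,
                occ π p s0 h s a * ((p s a s').toReal * EValAux π p φ n (h + 1) s') := by
            rw [← Finset.sum_add_distrib]
            exact Finset.sum_congr rfl fun s _ => step1 s
        _ = (∑ s : S, ∑ a : A, occ π p s0 h s a * φ h s a)
            + ∑ s' : S, (∑ a : A, occ π p s0 (h + 1) s' a)
                * EValAux π p φ n (h + 1) s' := by
            congr 1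
            rw [show (∑ s : S, ∑ a : A, ∑ s' : S,
                  occ π p s0 h s a * (((p s a) s').toReal * EValAux π p φ n (h + 1) s'))
                = ∑ s : S, ∑ s' : S, ∑ a : A,
                  occ π p s0 h s a * (((p s a) s').toReal * EValAux π p φ n (h + 1) s')
              from Finset.sum_congr rfl fun s _ => Finset.sum_comm, Finset.sum_comm]
            refine Finset.sum_congr rfl fun s' _ => ?_
            rw [hDstep h s' hh, Finset.sum_mul]
            refine Finset.sum_congr rfl fun s _ => ?_
            rw [Finset.sum_mul]
            exact Finset.sum_congr rfl fun a _ => by ring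
        _ = (∑ s : S, ∑ a : A, occ π p s0 h s a * φ h s a)
            + ∑ k ∈ Finset.range n, ∑ s : S, ∑ a : A,
                occ π p s0 (h + 1 + k) s a * φ (h + 1 + k) s a := by
            rw [ihn (h + 1) (by omega)]
        _ = ∑ k ∈ Finset.range (n + 1), ∑ s : S, ∑ a : A,
              occ π p s0 (h + k) s a * φ (h + k) s a := by
            rw [Finset.sum_range_succ', add_comm]
            congr 1
            · refine Finset.sum_congr rfl fun k _ => ?_
              rw [show h + (k + 1) = h + 1 + k by omega]
  have hD1 : ∀ s : S, (∑ a : A, occ π p s0 1 s a) = if s = s0 then 1 else 0 := by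
    intro s
    simp [occ, ← Finset.mul_sum, hπsum]
  have e2 := key (fun _ s a => m s a) H 1 le_rfl
  simp only [hD1, ite_mul, one_mul, zero_mul, Finset.sum_ite_eq',
    Finset.mem_univ, if_true] at e2
  have eV : Vf H π p m 1 s0 = EValAux π p (fun _ s a => m s a) H 1 s0 := by
    simp [Vf, EVal]
  rw [eV, e2, show Finset.Icc 1 H = Finset.Ico 1 (H + 1) by rw [Finset.Ico_add_one_right_eq_Icc],
    Finset.sum_Ico_eq_sum_range]
  simp only [Nat.add_sub_cancel]
  refine Finset.sum_congr rfl fun k hk => ?_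
  refine Finset.sum_congr rfl fun s _ => Finset.sum_congr rfl fun a _ => ?_
  rw [hocc (1 + k) (by omega) (by simp at hk; omega)]
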